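/- Equivalence of the two linear-MAC rate region descriptions: Fix finite-valued (U_1,U_2,Y) with U_1 ⊥ U_2, X_k = x_k(U_k), and for a nonzero vector b ∈ F_q² let W_b = b_1 U_1 ⊕ b_2 U_2 and I_{CF,k}(b) = H(U_k) − H(W_b|Y). Fix linearly independent nonzero b,c ∈ F_q² and W_c = c_1 U_1 ⊕ c_2 U_2. Then the region R̂ = {(R_1,R_2) : min(R_1−H(U_1), R_2−H(U_2)) < I(W_b;Y)−H(W_b) and min(R_1−H(U_1), R_2−H(U_2)) < I(W_c;Y,W_b)−H(W_c)} equals R̂_1 ∪ R̂_2, where R̂_1 = {(R_1,R_2): R_1 < min(I_{CF,1}(b), I(X_1,X_2;Y) − I_{CF,2}(b))} and R̂_2 = {(R_1,R_2): R_2 < min(I_{CF,2}(b), I(X_1,X_2;Y) − I_{CF,1}(b))}. A key identity used is H(U_1) + I(W_c;Y,W_b) − H(W_c) = I(X_1,X_2;Y) − I_{CF,2}(b), which relies on the chain rule H(W_b,W_c|Y) = H(U_1,U_2|Y) (since (b,c) invertible) and the Markov relations U_k → X_k → Y giving I(U_1,U_2;Y) = I(X_1,X_2;Y). -/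
import Mathlib


open scoped BigOperators

/-- Shannon entropy (base 2) of a pmf on a finite type. -/
noncomputable def Hent {β : Type*} [Fintype β] (f : β → ℝ) : ℝ :=
  - ∑ z, f z * Real.logb 2 (f z)

section

variable {F 𝒳₁ 𝒳₂ 𝒴 : Type*} [Field F] [Fintype F] [DecidableEq F]
  [Fintype 𝒳₁] [DecidableEq 𝒳₁] [Fintype 𝒳₂] [DecidableEq 𝒳₂] [Fintype 𝒴]
  (pU1 pU2 : F → ℝ) (x1 : F → 𝒳₁) (x2 : F → 𝒳₂) (Ch : 𝒳₁ → 𝒳₂ → 𝒴 → ℝ)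

/-- Joint pmf of `(U₁, U₂, Y)`: `U₁ ⊥ U₂`, `X_k = x_k(U_k)` and the channel acts
on `(X₁, X₂)`. -/
noncomputable def jointP (u1 u2 : F) (y : 𝒴) : ℝ :=
  pU1 u1 * pU2 u2 * Ch (x1 u1) (x2 u2) y

/-- Marginal pmf of the channel output `Y`. -/
noncomputable def pYm (y : 𝒴) : ℝ := ∑ u1, ∑ u2, jointP pU1 pU2 x1 x2 Ch u1 u2 y

/-- Pmf of the linear combination `W_b = b₁U₁ ⊕ b₂U₂`. -/
noncomputable def pWm (b : Fin 2 → F) (w : F) : ℝ :=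
  ∑ u1, ∑ u2, if b 0 * u1 + b 1 * u2 = w then pU1 u1 * pU2 u2 else 0

/-- Joint pmf of `(W_b, Y)`. -/
noncomputable def pWYm (b : Fin 2 → F) (z : F × 𝒴) : ℝ :=
  ∑ u1, ∑ u2, if b 0 * u1 + b 1 * u2 = z.1 then
    jointP pU1 pU2 x1 x2 Ch u1 u2 z.2 else 0

/-- Joint pmf of `(W_b, W_c, Y)`. -/
noncomputable def pWWYm (b c : Fin 2 → F) (z : F × F × 𝒴) : ℝ :=
  ∑ u1, ∑ u2, if b 0 * u1 + b 1 * u2 = z.1 ∧ c 0 * u1 + c 1 * u2 = z.2.1 then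
    jointP pU1 pU2 x1 x2 Ch u1 u2 z.2.2 else 0

/-- Joint pmf of `(X₁, X₂)`. -/
noncomputable def pXXm (s : 𝒳₁ × 𝒳₂) : ℝ :=
  ∑ u1, ∑ u2, if x1 u1 = s.1 ∧ x2 u2 = s.2 then pU1 u1 * pU2 u2 else 0

/-- Joint pmf of `(X₁, X₂, Y)`. -/
noncomputable def pXXYm (s : 𝒳₁ × 𝒳₂ × 𝒴) : ℝ :=
  ∑ u1, ∑ u2, if x1 u1 = s.1 ∧ x2 u2 = s.2.1 then
    jointP pU1 pU2 x1 x2 Ch u1 u2 s.2.2 else 0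


section AuxLemmas

variable {F 𝒳₁ 𝒳₂ 𝒴 : Type*} [Field F] [Fintype F] [DecidableEq F]
  [Fintype 𝒳₁] [DecidableEq 𝒳₁] [Fintype 𝒳₂] [DecidableEq 𝒳₂] [Fintype 𝒴]
  (pU1 pU2 : F → ℝ) (x1 : F → 𝒳₁) (x2 : F → 𝒳₂) (Ch : 𝒳₁ → 𝒳₂ → 𝒴 → ℝ)

set_option linter.unusedSectionVars false

lemma aux_mul_logb (a b : ℝ) (ha : 0 ≤ a) (hb : 0 ≤ b) :
    a * b * Real.logb 2 (a*b) = a*b*Real.logb 2 a + a*b*Real.logb 2 b := by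
  rcases ha.eq_or_lt with h|h
  · simp [← h]
  rcases hb.eq_or_lt with h'|h'
  · simp [← h']
  rw [Real.logb_mul h.ne' h'.ne', mul_add]

lemma aux3_mul_logb (a b ch : ℝ) (ha : 0 ≤ a) (hb : 0 ≤ b) (hc : 0 ≤ ch) :
    a*b*ch*Real.logb 2 (a*b*ch)
      = a*b*ch*Real.logb 2 a + a*b*ch*Real.logb 2 b + a*b*ch*Real.logb 2 ch := by
  have h1 := aux_mul_logb (a*b) ch (mul_nonneg ha hb) hc
  have h2 := aux_mul_logb a b ha hb
  linear_combination h1 + ch * h2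

lemma collapseP {α β : Type*} [Fintype α] [Fintype β] [DecidableEq α] [DecidableEq β]
    (a : α) (bb : β) (g : α → β → ℝ) :
    (∑ s : α × β, if a = s.1 ∧ bb = s.2 then g s.1 s.2 else 0) = g a bb := by
  rw [Fintype.sum_prod_type]
  simp [ite_and, Finset.sum_ite_eq']

lemma sum_triple {α β γ : Type*} [Fintype α] [Fintype β] [Fintype γ]
    (f : α × β × γ → ℝ) :
    ∑ z, f z = ∑ s : α × β, ∑ y, f (s.1, s.2, y) := by
  rw [← Equiv.sum_comp (Equiv.prodAssoc α β γ) f, Fintype.sum_prod_type]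
  simp [Fintype.sum_prod_type, Equiv.prodAssoc]

/-- The joint pmf of (U1,U2,Y) as a function on the product type. -/
noncomputable def jP (z : F × F × 𝒴) : ℝ := jointP pU1 pU2 x1 x2 Ch z.1 z.2.1 z.2.2

/-- noise entropy term -/
noncomputable def Cn : ℝ :=
  ∑ u1, ∑ u2, ∑ y, pU1 u1 * pU2 u2 * Ch (x1 u1) (x2 u2) y
    * Real.logb 2 (Ch (x1 u1) (x2 u2) y)

noncomputable def Cn2 : ℝ :=
  ∑ s : 𝒳₁ × 𝒳₂, ∑ y, pXXm pU1 pU2 x1 x2 s * Ch s.1 s.2 y * Real.logb 2 (Ch s.1 s.2 y)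

/-- Lemma A: entropy of (W_b,W_c,Y) equals entropy of (U1,U2,Y). -/
lemma lemA (b c : Fin 2 → F) (hbc : b 0 * c 1 ≠ b 1 * c 0) :
    Hent (pWWYm pU1 pU2 x1 x2 Ch b c) = Hent (jP pU1 pU2 x1 x2 Ch) := by
  set d : F := b 0 * c 1 - b 1 * c 0 with hd
  have hdne : d ≠ 0 := sub_ne_zero.mpr hbc
  set e : (F × F) ≃ (F × F) :=
    { toFun := fun p => (b 0 * p.1 + b 1 * p.2, c 0 * p.1 + c 1 * p.2)
      invFun := fun w => ((c 1 * w.1 - b 1 * w.2) / d, (b 0 * w.2 - c 0 * w.1) / d)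
      left_inv := by
        intro p
        refine Prod.ext ?_ ?_ <;> · field_simp; ring
      right_inv := by
        intro w
        refine Prod.ext ?_ ?_ <;> · field_simp; ring } with he
  set E : (F × F × 𝒴) ≃ (F × F × 𝒴) :=
    (Equiv.prodAssoc F F 𝒴).symm.trans
      ((e.prodCongr (Equiv.refl 𝒴)).trans (Equiv.prodAssoc F F 𝒴)) with hE
  have hval : ∀ z : F × F × 𝒴,
      pWWYm pU1 pU2 x1 x2 Ch b c (E z) = jP pU1 pU2 x1 x2 Ch z := by
    rintro ⟨v1, v2, y⟩
    have hEz : E (v1, v2, y) = (b 0 * v1 + b 1 * v2, c 0 * v1 + c 1 * v2, y) := rfl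
    rw [hEz]
    show (∑ u1, ∑ u2, if b 0 * u1 + b 1 * u2 = b 0 * v1 + b 1 * v2 ∧
        c 0 * u1 + c 1 * u2 = c 0 * v1 + c 1 * v2 then
        jointP pU1 pU2 x1 x2 Ch u1 u2 y else 0) = jointP pU1 pU2 x1 x2 Ch v1 v2 y
    have hcond : ∀ u1 u2 : F, (b 0 * u1 + b 1 * u2 = b 0 * v1 + b 1 * v2 ∧
        c 0 * u1 + c 1 * u2 = c 0 * v1 + c 1 * v2) ↔ (u1 = v1 ∧ u2 = v2) := by
      intro u1 u2
      constructor
      · intro h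
        have := e.injective (a₁ := (u1, u2)) (a₂ := (v1, v2)) (by
          simp only [he, Equiv.coe_fn_mk]
          exact Prod.ext h.1 h.2)
        exact ⟨congrArg Prod.fst this, congrArg Prod.snd this⟩
      · rintro ⟨rfl, rfl⟩; exact ⟨rfl, rfl⟩
    simp only [hcond]
    simp [ite_and, Finset.sum_ite_eq]
  unfold Hent
  rw [← Equiv.sum_comp E (fun z => pWWYm pU1 pU2 x1 x2 Ch b c z
    * Real.logb 2 (pWWYm pU1 pU2 x1 x2 Ch b c z))]
  simp only [hval]

variable (hpU1 : ∀ u, 0 ≤ pU1 u) (hpU1s : ∑ u, pU1 u = 1)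
  (hpU2 : ∀ u, 0 ≤ pU2 u) (hpU2s : ∑ u, pU2 u = 1)
  (hCh0 : ∀ s1 s2 y, 0 ≤ Ch s1 s2 y) (hCh1 : ∀ s1 s2, ∑ y, Ch s1 s2 y = 1)

include hpU1 hpU2 hCh0 hCh1 hpU1s hpU2s in
lemma lemB1 : Hent (jP pU1 pU2 x1 x2 Ch)
    = Hent pU1 + Hent pU2 - Cn pU1 pU2 x1 x2 Ch := by
  unfold Hent jP Cn
  rw [Fintype.sum_prod_type]
  simp only [Fintype.sum_prod_type]
  have hsplit : ∀ u1 u2 y, jointP pU1 pU2 x1 x2 Ch u1 u2 y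
      * Real.logb 2 (jointP pU1 pU2 x1 x2 Ch u1 u2 y)
      = pU1 u1 * pU2 u2 * Ch (x1 u1) (x2 u2) y * Real.logb 2 (pU1 u1)
        + pU1 u1 * pU2 u2 * Ch (x1 u1) (x2 u2) y * Real.logb 2 (pU2 u2)
        + pU1 u1 * pU2 u2 * Ch (x1 u1) (x2 u2) y
          * Real.logb 2 (Ch (x1 u1) (x2 u2) y) := by
    intro u1 u2 y
    exact aux3_mul_logb _ _ _ (hpU1 u1) (hpU2 u2) (hCh0 _ _ _)
  simp only [hsplit, Finset.sum_add_distrib]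
  have S1 : (∑ u1, ∑ u2, ∑ y,
      pU1 u1 * pU2 u2 * Ch (x1 u1) (x2 u2) y * Real.logb 2 (pU1 u1))
      = ∑ u1, pU1 u1 * Real.logb 2 (pU1 u1) := by
    refine Finset.sum_congr rfl fun u1 _ => ?_
    have h2 : ∀ u2 : F, (∑ y, pU1 u1 * pU2 u2 * Ch (x1 u1) (x2 u2) y
        * Real.logb 2 (pU1 u1))
        = (pU1 u1 * Real.logb 2 (pU1 u1)) * pU2 u2 := by
      intro u2
      rw [show (∑ y, pU1 u1 * pU2 u2 * Ch (x1 u1) (x2 u2) y * Real.logb 2 (pU1 u1))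
        = (pU1 u1 * Real.logb 2 (pU1 u1) * pU2 u2) * ∑ y, Ch (x1 u1) (x2 u2) y by
          rw [Finset.mul_sum]; exact Finset.sum_congr rfl fun y _ => by ring]
      rw [hCh1]; ring
    simp only [h2, ← Finset.mul_sum, hpU2s, mul_one]
  have S2 : (∑ u1, ∑ u2, ∑ y,
      pU1 u1 * pU2 u2 * Ch (x1 u1) (x2 u2) y * Real.logb 2 (pU2 u2))
      = ∑ u2, pU2 u2 * Real.logb 2 (pU2 u2) := by
    rw [Finset.sum_comm]
    refine Finset.sum_congr rfl fun u2 _ => ?_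
    have h2 : ∀ u1 : F, (∑ y, pU1 u1 * pU2 u2 * Ch (x1 u1) (x2 u2) y
        * Real.logb 2 (pU2 u2))
        = (pU2 u2 * Real.logb 2 (pU2 u2)) * pU1 u1 := by
      intro u1
      rw [show (∑ y, pU1 u1 * pU2 u2 * Ch (x1 u1) (x2 u2) y * Real.logb 2 (pU2 u2))
        = (pU2 u2 * Real.logb 2 (pU2 u2) * pU1 u1) * ∑ y, Ch (x1 u1) (x2 u2) y by
          rw [Finset.mul_sum]; exact Finset.sum_congr rfl fun y _ => by ring]
      rw [hCh1]; ring
    simp only [h2, ← Finset.mul_sum, hpU1s, mul_one]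
  rw [S1, S2]
  ring

lemma pXXY_eq : ∀ z : 𝒳₁ × 𝒳₂ × 𝒴, pXXYm pU1 pU2 x1 x2 Ch z
    = pXXm pU1 pU2 x1 x2 (z.1, z.2.1) * Ch z.1 z.2.1 z.2.2 := by
  rintro ⟨s1, s2, y⟩
  unfold pXXYm pXXm jointP
  rw [Finset.sum_mul]
  refine Finset.sum_congr rfl fun u1 _ => ?_
  rw [Finset.sum_mul]
  refine Finset.sum_congr rfl fun u2 _ => ?_
  by_cases h : x1 u1 = s1 ∧ x2 u2 = s2
  · rw [if_pos h, if_pos h, h.1, h.2]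
  · rw [if_neg h, if_neg h, zero_mul]

include hpU1 hpU2 in
lemma pXX_nonneg : ∀ s, 0 ≤ pXXm pU1 pU2 x1 x2 s := by
  intro s
  refine Finset.sum_nonneg fun u1 _ => Finset.sum_nonneg fun u2 _ => ?_
  split_ifs
  · exact mul_nonneg (hpU1 u1) (hpU2 u2)
  · exact le_refl 0

include hpU1 hpU2 hCh0 hCh1 in
lemma lemB2 : Hent (pXXYm pU1 pU2 x1 x2 Ch)
    = Hent (pXXm pU1 pU2 x1 x2) - Cn2 pU1 pU2 x1 x2 Ch := by
  unfold Hent Cn2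
  rw [sum_triple]
  have hpt : ∀ (s : 𝒳₁ × 𝒳₂) (y : 𝒴),
      pXXYm pU1 pU2 x1 x2 Ch (s.1, s.2, y)
        * Real.logb 2 (pXXYm pU1 pU2 x1 x2 Ch (s.1, s.2, y))
      = pXXm pU1 pU2 x1 x2 s * Ch s.1 s.2 y * Real.logb 2 (pXXm pU1 pU2 x1 x2 s)
        + pXXm pU1 pU2 x1 x2 s * Ch s.1 s.2 y * Real.logb 2 (Ch s.1 s.2 y) := by
    intro s y
    rw [pXXY_eq]
    exact aux_mul_logb _ _ (pXX_nonneg pU1 pU2 x1 x2 hpU1 hpU2 s) (hCh0 _ _ _)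
  simp only [hpt, Finset.sum_add_distrib]
  have S1 : (∑ s : 𝒳₁ × 𝒳₂, ∑ y,
      pXXm pU1 pU2 x1 x2 s * Ch s.1 s.2 y * Real.logb 2 (pXXm pU1 pU2 x1 x2 s))
      = ∑ s : 𝒳₁ × 𝒳₂, pXXm pU1 pU2 x1 x2 s * Real.logb 2 (pXXm pU1 pU2 x1 x2 s) := by
    refine Finset.sum_congr rfl fun s _ => ?_
    rw [show (∑ y, pXXm pU1 pU2 x1 x2 s * Ch s.1 s.2 y
        * Real.logb 2 (pXXm pU1 pU2 x1 x2 s))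
      = (pXXm pU1 pU2 x1 x2 s * Real.logb 2 (pXXm pU1 pU2 x1 x2 s)) * ∑ y, Ch s.1 s.2 y by
        rw [Finset.mul_sum]; exact Finset.sum_congr rfl fun y _ => by ring]
    rw [hCh1]; ring
  rw [S1]; ring

include hCh1 in
lemma lemB3 : Cn2 pU1 pU2 x1 x2 Ch = Cn pU1 pU2 x1 x2 Ch := by
  unfold Cn2 Cn
  have step1 : ∀ s : 𝒳₁ × 𝒳₂,
      (∑ y, pXXm pU1 pU2 x1 x2 s * Ch s.1 s.2 y * Real.logb 2 (Ch s.1 s.2 y))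
      = pXXm pU1 pU2 x1 x2 s * ∑ y, Ch s.1 s.2 y * Real.logb 2 (Ch s.1 s.2 y) := by
    intro s
    rw [Finset.mul_sum]
    exact Finset.sum_congr rfl fun y _ => by ring
  simp only [step1]
  have step2 : ∀ s : 𝒳₁ × 𝒳₂,
      pXXm pU1 pU2 x1 x2 s * ∑ y, Ch s.1 s.2 y * Real.logb 2 (Ch s.1 s.2 y)
      = ∑ u1, ∑ u2, (if x1 u1 = s.1 ∧ x2 u2 = s.2 then
          pU1 u1 * pU2 u2 * ∑ y, Ch s.1 s.2 y * Real.logb 2 (Ch s.1 s.2 y) else 0) := by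
    intro s
    unfold pXXm
    rw [Finset.sum_mul]
    refine Finset.sum_congr rfl fun u1 _ => ?_
    rw [Finset.sum_mul]
    refine Finset.sum_congr rfl fun u2 _ => ?_
    rw [ite_mul, zero_mul]
  simp only [step2]
  rw [Finset.sum_comm]
  refine Finset.sum_congr rfl fun u1 _ => ?_
  rw [Finset.sum_comm]
  refine Finset.sum_congr rfl fun u2 _ => ?_
  rw [collapseP (x1 u1) (x2 u2)
    (fun a bb => pU1 u1 * pU2 u2 * ∑ y, Ch a bb y * Real.logb 2 (Ch a bb y))]
  rw [Finset.mul_sum]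
  exact Finset.sum_congr rfl fun y _ => by ring

end AuxLemmas

/-- Equivalence of the two linear-MAC rate region descriptions
(Appendix E of the paper): with `I_{CF,k}(b) = H(U_k) − H(W_b|Y)`,
the region `R̂` described via the pair `(W_b, W_c)` equals `R̂₁ ∪ R̂₂`,
and the key identity
`H(U₁) + I(W_c;Y,W_b) − H(W_c) = I(X₁,X₂;Y) − I_{CF,2}(b)` holds. -/
theorem stmt_19
    (hpU1 : ∀ u, 0 ≤ pU1 u) (hpU1s : ∑ u, pU1 u = 1)
    (hpU2 : ∀ u, 0 ≤ pU2 u) (hpU2s : ∑ u, pU2 u = 1)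
    (hCh0 : ∀ s1 s2 y, 0 ≤ Ch s1 s2 y) (hCh1 : ∀ s1 s2, ∑ y, Ch s1 s2 y = 1)
    (b c : Fin 2 → F) (hbc : b 0 * c 1 ≠ b 1 * c 0) :
    {r : ℝ × ℝ |
        min (r.1 - Hent pU1) (r.2 - Hent pU2) <
          (Hent (pWm pU1 pU2 b) + Hent (pYm pU1 pU2 x1 x2 Ch)
            - Hent (pWYm pU1 pU2 x1 x2 Ch b)) - Hent (pWm pU1 pU2 b) ∧
        min (r.1 - Hent pU1) (r.2 - Hent pU2) <
          (Hent (pWm pU1 pU2 c) + Hent (pWYm pU1 pU2 x1 x2 Ch b)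
            - Hent (pWWYm pU1 pU2 x1 x2 Ch b c)) - Hent (pWm pU1 pU2 c)} =
      {r : ℝ × ℝ | r.1 <
          min (Hent pU1 - (Hent (pWYm pU1 pU2 x1 x2 Ch b) - Hent (pYm pU1 pU2 x1 x2 Ch)))
            ((Hent (pXXm pU1 pU2 x1 x2) + Hent (pYm pU1 pU2 x1 x2 Ch)
                - Hent (pXXYm pU1 pU2 x1 x2 Ch))
              - (Hent pU2 - (Hent (pWYm pU1 pU2 x1 x2 Ch b)
                  - Hent (pYm pU1 pU2 x1 x2 Ch))))} ∪
      {r : ℝ × ℝ | r.2 <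
          min (Hent pU2 - (Hent (pWYm pU1 pU2 x1 x2 Ch b) - Hent (pYm pU1 pU2 x1 x2 Ch)))
            ((Hent (pXXm pU1 pU2 x1 x2) + Hent (pYm pU1 pU2 x1 x2 Ch)
                - Hent (pXXYm pU1 pU2 x1 x2 Ch))
              - (Hent pU1 - (Hent (pWYm pU1 pU2 x1 x2 Ch b)
                  - Hent (pYm pU1 pU2 x1 x2 Ch))))} ∧
      Hent pU1 + (Hent (pWm pU1 pU2 c) + Hent (pWYm pU1 pU2 x1 x2 Ch b)
          - Hent (pWWYm pU1 pU2 x1 x2 Ch b c)) - Hent (pWm pU1 pU2 c)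
        = (Hent (pXXm pU1 pU2 x1 x2) + Hent (pYm pU1 pU2 x1 x2 Ch)
            - Hent (pXXYm pU1 pU2 x1 x2 Ch))
          - (Hent pU2 - (Hent (pWYm pU1 pU2 x1 x2 Ch b)
              - Hent (pYm pU1 pU2 x1 x2 Ch))) := by
  have hKmain : Hent pU1 + Hent pU2 + Hent (pXXYm pU1 pU2 x1 x2 Ch)
      = Hent (pXXm pU1 pU2 x1 x2) + Hent (pWWYm pU1 pU2 x1 x2 Ch b c) := by
    rw [lemA pU1 pU2 x1 x2 Ch b c hbc,
      lemB1 pU1 pU2 x1 x2 Ch hpU1 hpU1s hpU2 hpU2s hCh0 hCh1,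
      lemB2 pU1 pU2 x1 x2 Ch hpU1 hpU2 hCh0 hCh1,
      lemB3 pU1 pU2 x1 x2 Ch hCh1]
    ring
  set a1 := Hent pU1 with ha1
  set a2 := Hent pU2 with ha2
  set hY := Hent (pYm pU1 pU2 x1 x2 Ch) with hhY
  set hW := Hent (pWm pU1 pU2 b) with hhW
  set hWc := Hent (pWm pU1 pU2 c) with hhWc
  set hWY := Hent (pWYm pU1 pU2 x1 x2 Ch b) with hhWY
  set hWWY := Hent (pWWYm pU1 pU2 x1 x2 Ch b c) with hhWWY
  set hXX := Hent (pXXm pU1 pU2 x1 x2) with hhXX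
  set hXXY := Hent (pXXYm pU1 pU2 x1 x2 Ch) with hhXXY
  constructor
  · ext r
    simp only [Set.mem_setOf_eq, Set.mem_union]
    constructor
    · rintro ⟨h1, h2⟩
      rcases min_lt_iff.mp h1 with ha|ha <;> rcases min_lt_iff.mp h2 with hb|hb
      · exact Or.inl (lt_min_iff.mpr ⟨by linarith, by linarith⟩)
      · rcases le_total (r.1 - a1) (r.2 - a2) with h|h
        · exact Or.inl (lt_min_iff.mpr ⟨by linarith, by linarith⟩)
        · exact Or.inr (lt_min_iff.mpr ⟨by linarith, by linarith⟩)
      · rcases le_total (r.1 - a1) (r.2 - a2) with h|h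
        · exact Or.inl (lt_min_iff.mpr ⟨by linarith, by linarith⟩)
        · exact Or.inr (lt_min_iff.mpr ⟨by linarith, by linarith⟩)
      · exact Or.inr (lt_min_iff.mpr ⟨by linarith, by linarith⟩)
    · rintro (h|h) <;> rw [lt_min_iff] at h
      · exact ⟨min_lt_iff.mpr (Or.inl (by linarith [h.1])),
          min_lt_iff.mpr (Or.inl (by linarith [h.2]))⟩
      · exact ⟨min_lt_iff.mpr (Or.inr (by linarith [h.1])),
          min_lt_iff.mpr (Or.inr (by linarith [h.2]))⟩
  · linarith


end
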